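/- Let M be a compact smooth manifold and let 𝓜 be a finitely generated projective module over C^∞(M,ℂ). Then the rank function x ↦ dim_ℂ 𝓜/(I_x·𝓜) takes finite values and is locally constant on M. -/

import Mathlib

open Bundle Manifold
open scoped TensorProduct

local notation "∞" => (⊤ : ℕ∞)

noncomputable section

/-- Complex multiplication and addition are smooth over `ℝ`, so that the complex-valued smooth
functions on a real manifold form a (comm)ring. -/
instance : ContMDiffRing 𝓘(ℝ, ℂ) (⊤ : ℕ∞) ℂ where
  contMDiff_add := by
    rw [contMDiff_iff]
    refine ⟨continuous_add, fun x y => ?_⟩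
    simp only [mfld_simps]
    exact contDiff_add.contDiffOn
  contMDiff_mul := by
    rw [contMDiff_iff]
    refine ⟨continuous_mul, fun x y => ?_⟩
    simp only [mfld_simps]
    exact contDiff_mul.contDiffOn

variable {EM : Type*} [NormedAddCommGroup EM] [NormedSpace ℝ EM] [FiniteDimensional ℝ EM]
  {HM : Type*} [TopologicalSpace HM] {IM : ModelWithCorners ℝ EM HM}
  {M : Type*} [TopologicalSpace M] [ChartedSpace HM M] [IsManifold IM (⊤ : ℕ∞) M]
  [T2Space M] [SecondCountableTopology M] [CompactSpace M]

/-- The constant functions make the smooth complex-valued functions a `ℂ`-algebra. -/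
instance : Algebra ℂ C^∞⟮IM, M; 𝓘(ℝ, ℂ), ℂ⟯ :=
  RingHom.toAlgebra
    { toFun := fun c => ⟨fun _ => c, contMDiff_const⟩
      map_one' := rfl
      map_mul' := fun _ _ => rfl
      map_zero' := rfl
      map_add' := fun _ _ => rfl }

/-- `I_x`, the ideal of smooth complex-valued functions vanishing at the point `x`. -/
def SmoothMap.idealOfPoint (x : M) : Ideal C^∞⟮IM, M; 𝓘(ℝ, ℂ), ℂ⟯ :=
  RingHom.ker (ContMDiffMap.evalRingHom x : C^∞⟮IM, M; 𝓘(ℝ, ℂ), ℂ⟯ →+* ℂ)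

/-- Evaluation at a point as a `ℂ`-algebra homomorphism. -/
def SmoothMap.evalAlgHomC (x : M) : C^∞⟮IM, M; 𝓘(ℝ, ℂ), ℂ⟯ →ₐ[ℂ] ℂ :=
  { ContMDiffMap.evalRingHom x with commutes' := fun _ => rfl }

set_option maxHeartbeats 2000000 in
/-- The rank function of a finitely generated projective module over the smooth complex-valued
functions on a compact manifold takes finite values and is locally constant. -/
theorem rank_locallyConstant_of_projective (𝓜 : Type*) [AddCommGroup 𝓜]
    [Module ℂ 𝓜] [Module C^∞⟮IM, M; 𝓘(ℝ, ℂ), ℂ⟯ 𝓜]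
    [IsScalarTower ℂ C^∞⟮IM, M; 𝓘(ℝ, ℂ), ℂ⟯ 𝓜]
    (hfin : Module.Finite C^∞⟮IM, M; 𝓘(ℝ, ℂ), ℂ⟯ 𝓜)
    (hproj : Module.Projective C^∞⟮IM, M; 𝓘(ℝ, ℂ), ℂ⟯ 𝓜) :
    (∀ x : M, FiniteDimensional ℂ
      (𝓜 ⧸ (SmoothMap.idealOfPoint (IM := IM) x • (⊤ : Submodule C^∞⟮IM, M; 𝓘(ℝ, ℂ), ℂ⟯ 𝓜)))) ∧
    IsLocallyConstant (fun x : M => Module.finrank ℂ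
      (𝓜 ⧸ (SmoothMap.idealOfPoint (IM := IM) x • (⊤ : Submodule C^∞⟮IM, M; 𝓘(ℝ, ℂ), ℂ⟯ 𝓜)))) := by
  haveI := hfin; haveI := hproj
  set R := C^∞⟮IM, M; 𝓘(ℝ, ℂ), ℂ⟯ with hR
  obtain ⟨n, pr, hπ⟩ := Module.Finite.exists_fin' R 𝓜
  obtain ⟨sg, hσ⟩ := Module.projective_lifting_property pr LinearMap.id hπ
  set p : (Fin n → R) →ₗ[R] (Fin n → R) := sg ∘ₗ pr with hp
  have hppv : ∀ v, pr (p v) = pr v := fun v => LinearMap.congr_fun hσ (pr v)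
  set A : Matrix (Fin n) (Fin n) R := LinearMap.toMatrix' p with hA
  have hpp : p ∘ₗ p = p := LinearMap.ext fun v => congrArg sg (hppv v)
  have hAA : A * A = A := by
    rw [hA, ← LinearMap.toMatrix'_comp, hpp]
  have hpA : ∀ v, p v = A.mulVec v := fun v => by
    conv_lhs => rw [← Matrix.toLin'_toMatrix' p]
    rw [Matrix.toLin'_apply]
  have key : ∀ x : M, FiniteDimensional ℂ
      (𝓜 ⧸ (SmoothMap.idealOfPoint (IM := IM) x • (⊤ : Submodule R 𝓜))) ∧
      ((Module.finrank ℂ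
        (𝓜 ⧸ (SmoothMap.idealOfPoint (IM := IM) x • (⊤ : Submodule R 𝓜))) : ℂ)
        = Matrix.trace A x) := by
    intro x
    set I := SmoothMap.idealOfPoint (IM := IM) x with hI
    set N : Submodule R 𝓜 := I • ⊤ with hN
    set ε : R →ₐ[ℂ] ℂ := SmoothMap.evalAlgHomC (IM := IM) x with hε
    have hεapp : ∀ f : R, ε f = f x := fun f => rfl
    have hIiff : ∀ f : R, f ∈ I ↔ f x = 0 := by
      intro f
      simp only [hI, SmoothMap.idealOfPoint, RingHom.mem_ker]
      exact Iff.rfl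
    have hIf : ∀ f : R, f ∈ I → f x = 0 := fun f hf => (hIiff f).mp hf
    set Ax : Matrix (Fin n) (Fin n) ℂ := A.map ε.toRingHom with hAx
    have hAxAx : Ax * Ax = Ax := by
      rw [hAx, ← Matrix.map_mul, hAA]
    set c : (Fin n → ℂ) →ₗ[ℂ] (Fin n → R) := (Algebra.linearMap ℂ R).compLeft (Fin n) with hc
    set E : (Fin n → R) →ₗ[ℂ] (Fin n → ℂ) := ε.toLinearMap.compLeft (Fin n) with hE
    set q : 𝓜 →ₗ[ℂ] (𝓜 ⧸ N) := N.mkQ.restrictScalars ℂ with hq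
    set Φ : (Fin n → ℂ) →ₗ[ℂ] (𝓜 ⧸ N) := q ∘ₗ (pr.restrictScalars ℂ) ∘ₗ c with hΦ
    have hΦapp : ∀ w, Φ w = N.mkQ (pr (c w)) := fun w => rfl
    have hEc : ∀ w : Fin n → ℂ, E (c w) = w := fun w => funext fun i => rfl
    have hEmul : ∀ v : Fin n → R, E (A.mulVec v) = Ax.mulVec (E v) := by
      intro v
      funext j
      show ε ((A.mulVec v) j) = (Ax.mulVec fun i => ε (v i)) j
      simp [Matrix.mulVec, dotProduct, map_sum, map_mul, hAx]
    have hmemN : ∀ v : Fin n → R, (∀ i, (v i) x = 0) → pr v ∈ N := by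
      intro v hv
      have hv' : v = ∑ i, v i • fun j => if i = j then (1 : R) else 0 := pi_eq_sum_univ v
      rw [hv', map_sum]
      refine Submodule.sum_mem _ fun i _ => ?_
      rw [map_smul]
      exact Submodule.smul_mem_smul (((hIiff _).mpr (hv i))) trivial
    have hdiff : ∀ v : Fin n → R, N.mkQ (pr (c (E v))) = N.mkQ (pr v) := by
      intro v
      have hmem : pr (c (E v)) - pr v ∈ N := by
        rw [← map_sub]
        refine hmemN _ fun i => ?_
        show ((c (E v)) i - v i) x = 0
        show ((c (E v)) i) x - (v i) x = 0
        show (v i) x - (v i) x = 0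
        exact sub_self _
      simpa [Submodule.mkQ_apply] using (Submodule.Quotient.eq N).mpr hmem
    have hΦsurj : Function.Surjective Φ := by
      intro m
      obtain ⟨m, rfl⟩ := N.mkQ_surjective m
      obtain ⟨v, rfl⟩ := hπ m
      exact ⟨E v, hdiff v⟩
    have hΦA : ∀ w, Φ (Ax.mulVec w) = Φ w := by
      intro w
      have h1 : Ax.mulVec w = E (p (c w)) := by rw [hpA, hEmul, hEc]
      calc Φ (Ax.mulVec w) = Φ (E (p (c w))) := by rw [h1]
        _ = N.mkQ (pr (c (E (p (c w))))) := hΦapp _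
        _ = N.mkQ (pr (p (c w))) := hdiff _
        _ = N.mkQ (pr (c w)) := by rw [hppv]
        _ = Φ w := (hΦapp w).symm
    have hcomp : ∀ u : Fin n → R, u ∈ (I • (⊤ : Submodule R (Fin n → R))) →
        ∀ i, (u i) x = 0 := by
      intro u hu i
      refine Submodule.smul_induction_on (p := fun w => (w i) x = 0) hu ?_ ?_
      · intro r hr m _
        show (r * m i) x = 0
        show r x * (m i) x = 0
        rw [hIf r hr, zero_mul]
      · intro a b ha hb
        show (a i + b i) x = 0
        show (a i) x + (b i) x = 0
        rw [ha, hb, add_zero]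
    set f : (Fin n → ℂ) →ₗ[ℂ] (Fin n → ℂ) := Matrix.toLin' Ax with hf
    have hfapply : ∀ w, f w = Ax.mulVec w := fun w => Matrix.toLin'_apply _ _
    have hker : ∀ w ∈ LinearMap.range f, Φ w = 0 → w = 0 := by
      rintro w ⟨u, hu⟩ hΦw
      have hw' : w = Ax.mulVec u := by rw [← hu, hfapply]
      have hfix : Ax.mulVec w = w := by rw [hw', Matrix.mulVec_mulVec, hAxAx]
      have hmem : pr (c w) ∈ N := by
        have h0 : N.mkQ (pr (c w)) = 0 := hΦw
        rw [Submodule.mkQ_apply, Submodule.Quotient.mk_eq_zero] at h0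
        exact h0
      have hmem2 : sg (pr (c w)) ∈ I • (⊤ : Submodule R (Fin n → R)) := by
        have h3 : sg (pr (c w)) ∈ N.map sg := Submodule.mem_map_of_mem hmem
        rw [hN, Submodule.map_smul''] at h3
        exact (show I • Submodule.map sg ⊤ ≤ I • ⊤ from smul_mono_right _ le_top) h3
      have h4 : ∀ i, ((p (c w)) i) x = 0 := hcomp _ hmem2
      have h5 : E (p (c w)) = 0 := funext fun i => h4 i
      rw [hpA, hEmul, hEc] at h5
      rw [← hfix, h5]
    have hg : Function.Bijective (Φ.comp (LinearMap.range f).subtype) := by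
      constructor
      · intro a b hab
        have hsub : (a : Fin n → ℂ) - b ∈ LinearMap.range f := sub_mem a.2 b.2
        have h0 : Φ ((a : Fin n → ℂ) - b) = 0 := by
          rw [map_sub, sub_eq_zero]; exact hab
        exact Subtype.ext (sub_eq_zero.mp (hker _ hsub h0))
      · intro m
        obtain ⟨w, hw⟩ := hΦsurj m
        refine ⟨⟨f w, LinearMap.mem_range_self f w⟩, ?_⟩
        show Φ (f w) = m
        rw [hfapply, hΦA, hw]
    let e : (LinearMap.range f) ≃ₗ[ℂ] (𝓜 ⧸ N) := LinearEquiv.ofBijective _ hg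
    haveI hFD : FiniteDimensional ℂ (𝓜 ⧸ N) := Module.Finite.equiv e
    refine ⟨hFD, ?_⟩
    have hfr : Module.finrank ℂ (𝓜 ⧸ N) = Module.finrank ℂ (LinearMap.range f) :=
      (LinearEquiv.finrank_eq e).symm
    have hff : f ∘ₗ f = f := by rw [hf, ← Matrix.toLin'_mul, hAxAx]
    obtain ⟨P, hP⟩ := (LinearMap.isProj_iff_isIdempotentElem f).mpr hff
    have hPr : P = LinearMap.range f :=
      le_antisymm (fun y hy => ⟨y, hP.map_id y hy⟩)
        (by rintro _ ⟨u, rfl⟩; exact hP.map_mem u)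
    have htr : LinearMap.trace ℂ (Fin n → ℂ) f = Matrix.trace Ax := by
      rw [LinearMap.trace_eq_matrix_trace ℂ (Pi.basisFun ℂ (Fin n)) f,
        LinearMap.toMatrix_eq_toMatrix', hf, LinearMap.toMatrix'_toLin']
    have htr2 : Matrix.trace Ax = (Matrix.trace A) x := by
      have hsum : ε (∑ i, A i i) = ∑ i, ε (A i i) :=
        map_sum (ε : R →ₐ[ℂ] ℂ) (fun i => A i i) Finset.univ
      calc Matrix.trace Ax = ∑ i, ε (A i i) := by
            simp [hAx, Matrix.trace, Matrix.diag, Matrix.map_apply]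
        _ = ε (∑ i, A i i) := hsum.symm
        _ = (Matrix.trace A) x := by
            rw [hεapp, show Matrix.trace A = ∑ i, A i i from by
              simp [Matrix.trace, Matrix.diag]]
    calc ((Module.finrank ℂ (𝓜 ⧸ N) : ℂ))
        = (Module.finrank ℂ P : ℂ) := by rw [hfr, hPr]
      _ = LinearMap.trace ℂ (Fin n → ℂ) f := hP.trace.symm
      _ = Matrix.trace Ax := htr
      _ = Matrix.trace A x := htr2
  refine ⟨fun x => (key x).1, ?_⟩
  have ht : Continuous fun y : M => (Matrix.trace A) y := (Matrix.trace A).contMDiff.continuous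
  rw [IsLocallyConstant.iff_eventually_eq]
  intro x
  have hx : ∀ᶠ y in nhds x, (Matrix.trace A) y ∈ Metric.ball ((Matrix.trace A) x) 1 :=
    (ht.tendsto x).eventually_mem (Metric.ball_mem_nhds _ one_pos)
  filter_upwards [hx] with y hy
  have h1 := (key y).2
  have h2 := (key x).2
  rw [← h1, ← h2] at hy
  rw [Metric.mem_ball, Complex.dist_eq] at hy
  by_contra hne
  set a := Module.finrank ℂ (𝓜 ⧸ (SmoothMap.idealOfPoint (IM := IM) y • (⊤ : Submodule R 𝓜)))
  set b := Module.finrank ℂ (𝓜 ⧸ (SmoothMap.idealOfPoint (IM := IM) x • (⊤ : Submodule R 𝓜)))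
  have hcast : ((a : ℂ) - b) = (((a : ℤ) - (b : ℤ) : ℤ) : ℂ) := by push_cast; ring
  have habs : (1 : ℝ) ≤ ‖(a : ℂ) - b‖ := by
    rw [hcast, Complex.norm_intCast]
    have hk : (a : ℤ) - b ≠ 0 := sub_ne_zero.mpr fun h => hne (by exact_mod_cast h)
    have h2 : (1 : ℤ) ≤ |(a : ℤ) - b| := Int.one_le_abs hk
    exact_mod_cast h2
  exact absurd hy (not_lt.mpr habs)

end
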